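/- arXiv:math/0510218 — 4 statements merged into one kernel-verified Lean document; each statement's English description precedes it below -/
import Mathlib

section
/- Let F = MonoidAlgebra ℚ (FreeMonoid ℕ) with the three bilinear operations ≺, ∘, ≻ defined on basis words by Loday–Ronco's max-letter rule. Then the operation ∘ is associative: for all x, y, z ∈ F, (x ∘ y) ∘ z = x ∘ (y ∘ z). -/
/-- The right operation `≻` of the Loday–Ronco dendriform trialgebra structure on
noncommutative polynomials: on basis words, `u ≻ v = uv` if `u, v` are nonempty and
`max u < max v`, and `0` otherwise; extended bilinearly. -/
noncomputable def trSucc {α : Type*} [LinearOrder α]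
    (x y : MonoidAlgebra ℚ (FreeMonoid α)) : MonoidAlgebra ℚ (FreeMonoid α) :=
  x.coeff.sum fun u a => y.coeff.sum fun v b =>
    if u.toList ≠ [] ∧ v.toList ≠ [] ∧ u.toList.maximum < v.toList.maximum
    then MonoidAlgebra.single (u * v) (a * b) else 0

/-- The middle operation `∘`: on basis words, `u ∘ v = uv` if `u, v` are nonempty and
`max u = max v`, and `0` otherwise; extended bilinearly. -/
noncomputable def trCirc {α : Type*} [LinearOrder α]
    (x y : MonoidAlgebra ℚ (FreeMonoid α)) : MonoidAlgebra ℚ (FreeMonoid α) :=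
  x.coeff.sum fun u a => y.coeff.sum fun v b =>
    if u.toList ≠ [] ∧ v.toList ≠ [] ∧ u.toList.maximum = v.toList.maximum
    then MonoidAlgebra.single (u * v) (a * b) else 0

/-- The left operation `≺`: on basis words, `u ≺ v = uv` if `u, v` are nonempty and
`max u > max v`, and `0` otherwise; extended bilinearly. -/
noncomputable def trPrec {α : Type*} [LinearOrder α]
    (x y : MonoidAlgebra ℚ (FreeMonoid α)) : MonoidAlgebra ℚ (FreeMonoid α) :=
  x.coeff.sum fun u a => y.coeff.sum fun v b =>
    if u.toList ≠ [] ∧ v.toList ≠ [] ∧ v.toList.maximum < u.toList.maximum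
    then MonoidAlgebra.single (u * v) (a * b) else 0

lemma maximum_append' {α : Type*} [LinearOrder α] (l₁ l₂ : List α) :
    (l₁ ++ l₂).maximum = max l₁.maximum l₂.maximum := by
  induction l₁ with
  | nil => simp
  | cons a l ih => simp [List.maximum_cons, ih, max_assoc]

lemma trCirc_single_single {α : Type*} [LinearOrder α] (u v : FreeMonoid α) (a b : ℚ) :
    trCirc (MonoidAlgebra.single u a) (MonoidAlgebra.single v b) =
    if u.toList ≠ [] ∧ v.toList ≠ [] ∧ u.toList.maximum = v.toList.maximum
    then MonoidAlgebra.single (u * v) (a * b) else 0 := by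
  unfold trCirc
  rw [MonoidAlgebra.coeff_single, Finsupp.sum_single_index]
  · rw [MonoidAlgebra.coeff_single, Finsupp.sum_single_index]
    split <;> simp
  · apply Finset.sum_eq_zero
    intro v' _
    dsimp only
    split <;> simp

lemma trCirc_zero_left {α : Type*} [LinearOrder α] (y : MonoidAlgebra ℚ (FreeMonoid α)) :
    trCirc 0 y = 0 := by simp [trCirc]

lemma trCirc_zero_right {α : Type*} [LinearOrder α] (x : MonoidAlgebra ℚ (FreeMonoid α)) :
    trCirc x 0 = 0 := by simp [trCirc]

lemma trCirc_add_left {α : Type*} [LinearOrder α]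
    (x x' y : MonoidAlgebra ℚ (FreeMonoid α)) :
    trCirc (x + x') y = trCirc x y + trCirc x' y := by
  unfold trCirc
  rw [MonoidAlgebra.coeff_add]
  apply Finsupp.sum_add_index'
  · intro u
    apply Finset.sum_eq_zero
    intro v _
    dsimp only
    split <;> simp
  · intro u a a'
    rw [← Finsupp.sum_add]
    apply Finsupp.sum_congr
    intro v _
    split <;> simp [add_mul]

lemma trCirc_add_right {α : Type*} [LinearOrder α]
    (x y y' : MonoidAlgebra ℚ (FreeMonoid α)) :
    trCirc x (y + y') = trCirc x y + trCirc x y' := by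
  unfold trCirc
  rw [← Finsupp.sum_add]
  apply Finsupp.sum_congr
  intro u _
  rw [MonoidAlgebra.coeff_add]
  apply Finsupp.sum_add_index'
  · intro v; split <;> simp
  · intro v b b'; split <;> simp [mul_add]

lemma circ_assoc_single (u v w : FreeMonoid ℕ) (a b c : ℚ) :
    trCirc (trCirc (MonoidAlgebra.single u a) (MonoidAlgebra.single v b))
        (MonoidAlgebra.single w c) =
    trCirc (MonoidAlgebra.single u a)
        (trCirc (MonoidAlgebra.single v b) (MonoidAlgebra.single w c)) := by
  rw [trCirc_single_single, trCirc_single_single]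
  have e1 : (u * v).toList = u.toList ++ v.toList := FreeMonoid.toList_mul u v
  have e2 : (v * w).toList = v.toList ++ w.toList := FreeMonoid.toList_mul v w
  by_cases h1 : u.toList ≠ [] ∧ v.toList ≠ [] ∧ u.toList.maximum = v.toList.maximum
  · rw [if_pos h1]
    obtain ⟨hu, hv, huv⟩ := h1
    have m1 : (u * v).toList.maximum = v.toList.maximum := by
      rw [e1, maximum_append', huv, max_self]
    have n1 : (u * v).toList ≠ [] := by
      rw [e1]; simp [hu]
    by_cases h2 : v.toList ≠ [] ∧ w.toList ≠ [] ∧ v.toList.maximum = w.toList.maximum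
    · rw [if_pos h2]
      obtain ⟨-, hw, hvw⟩ := h2
      have m2 : (v * w).toList.maximum = v.toList.maximum := by
        rw [e2, maximum_append', hvw, max_self]
      have n2 : (v * w).toList ≠ [] := by
        rw [e2]; simp [hv]
      rw [trCirc_single_single, trCirc_single_single,
        if_pos ⟨n1, hw, m1.trans hvw⟩, if_pos ⟨hu, n2, huv.trans m2.symm⟩,
        mul_assoc, mul_assoc]
    · rw [if_neg h2, trCirc_zero_right, trCirc_single_single, if_neg]
      rintro ⟨-, hw, huvw⟩
      exact h2 ⟨hv, hw, m1.symm.trans huvw⟩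
  · rw [if_neg h1, trCirc_zero_left]
    by_cases h2 : v.toList ≠ [] ∧ w.toList ≠ [] ∧ v.toList.maximum = w.toList.maximum
    · rw [if_pos h2]
      obtain ⟨hv, hw, hvw⟩ := h2
      have m2 : (v * w).toList.maximum = v.toList.maximum := by
        rw [e2, maximum_append', hvw, max_self]
      rw [trCirc_single_single, if_neg]
      rintro ⟨hu, -, huvw⟩
      exact h1 ⟨hu, hv, huvw.trans m2⟩
    · rw [if_neg h2, trCirc_zero_right]

lemma circ_assoc_ssz (u v : FreeMonoid ℕ) (a b : ℚ) (z : MonoidAlgebra ℚ (FreeMonoid ℕ)) :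
    trCirc (trCirc (MonoidAlgebra.single u a) (MonoidAlgebra.single v b)) z =
    trCirc (MonoidAlgebra.single u a) (trCirc (MonoidAlgebra.single v b) z) := by
  induction z using MonoidAlgebra.induction with
  | zero => simp [trCirc_zero_right]
  | single_add w c z _ _ ihz =>
    rw [trCirc_add_right, trCirc_add_right, trCirc_add_right, ihz, circ_assoc_single]

lemma circ_assoc_syz (u : FreeMonoid ℕ) (a : ℚ) (y z : MonoidAlgebra ℚ (FreeMonoid ℕ)) :
    trCirc (trCirc (MonoidAlgebra.single u a) y) z =
    trCirc (MonoidAlgebra.single u a) (trCirc y z) := by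
  induction y using MonoidAlgebra.induction with
  | zero => simp [trCirc_zero_left, trCirc_zero_right]
  | single_add v b y _ _ ihy =>
    rw [trCirc_add_right, trCirc_add_left, trCirc_add_left, trCirc_add_right, ihy,
      circ_assoc_ssz]

/-- The operation `∘` of the dendriform trialgebra structure on
`MonoidAlgebra ℚ (FreeMonoid ℕ)` is associative. -/
theorem circ_assoc (x y z : MonoidAlgebra ℚ (FreeMonoid ℕ)) :
    trCirc (trCirc x y) z = trCirc x (trCirc y z) := by
  induction x using MonoidAlgebra.induction with
  | zero => simp [trCirc_zero_left]
  | single_add u a x _ _ ihx =>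
    rw [trCirc_add_left, trCirc_add_left, trCirc_add_left, ihx, circ_assoc_syz]
end

section
/- Let F = MonoidAlgebra ℚ (FreeMonoid ℕ) with the three bilinear operations ≺, ∘, ≻ defined on basis words by Loday–Ronco's max-letter rule. Then for all x, y, z ∈ F, (x ≺ y + x ∘ y + x ≻ y) ≻ z = x ≻ (y ≻ z). -/
noncomputable def trOp {α : Type*} (P : FreeMonoid α → FreeMonoid α → Prop)
    [∀ u v, Decidable (P u v)]
    (x y : MonoidAlgebra ℚ (FreeMonoid α)) : MonoidAlgebra ℚ (FreeMonoid α) :=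
  x.coeff.sum fun u a => y.coeff.sum fun v b =>
    if P u v then MonoidAlgebra.single (u * v) (a * b) else 0

section Generic
variable {α : Type*} (P : FreeMonoid α → FreeMonoid α → Prop) [∀ u v, Decidable (P u v)]

lemma trOp_zero_left (y) : trOp P 0 y = 0 := by simp [trOp]

lemma trOp_zero_right (x) : trOp P x 0 = 0 := by simp [trOp]

lemma inner_zero (u : FreeMonoid α) (y : MonoidAlgebra ℚ (FreeMonoid α)) :
    (y.coeff.sum fun v b => if P u v then MonoidAlgebra.single (u * v) ((0:ℚ) * b) else 0) = 0 := by
  rw [Finsupp.sum]; apply Finset.sum_eq_zero; intros; split <;> simp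

lemma trOp_add_left (x₁ x₂ y) : trOp P (x₁ + x₂) y = trOp P x₁ y + trOp P x₂ y := by
  unfold trOp
  rw [MonoidAlgebra.coeff_add]
  refine Finsupp.sum_add_index' (fun u => inner_zero P u y) fun u a₁ a₂ => ?_
  rw [← Finsupp.sum_add]
  congr 1; funext v b
  split
  · rw [add_mul]; exact MonoidAlgebra.single_add _ _ _
  · rw [add_zero]

lemma trOp_add_right (x y₁ y₂) : trOp P x (y₁ + y₂) = trOp P x y₁ + trOp P x y₂ := by
  unfold trOp
  rw [← Finsupp.sum_add]
  congr 1; funext u a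
  rw [MonoidAlgebra.coeff_add]
  refine Finsupp.sum_add_index' (fun v => ?_) fun v b₁ b₂ => ?_
  · split <;> simp
  · split
    · rw [mul_add]; exact MonoidAlgebra.single_add _ _ _
    · rw [add_zero]

lemma trOp_single_single (u v a b) :
    trOp P (MonoidAlgebra.single u a) (MonoidAlgebra.single v b) =
      if P u v then MonoidAlgebra.single (u * v) (a * b) else 0 := by
  unfold trOp
  rw [MonoidAlgebra.coeff_single, MonoidAlgebra.coeff_single]
  rw [Finsupp.sum_single_index (inner_zero P u _), Finsupp.sum_single_index]
  split <;> simp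

end Generic

section Ops
variable {α : Type*} [LinearOrder α]

lemma trSucc_eq (x y : MonoidAlgebra ℚ (FreeMonoid α)) :
    trSucc x y = trOp (fun u v => u.toList ≠ [] ∧ v.toList ≠ [] ∧
      u.toList.maximum < v.toList.maximum) x y := rfl

lemma trCirc_eq (x y : MonoidAlgebra ℚ (FreeMonoid α)) :
    trCirc x y = trOp (fun u v => u.toList ≠ [] ∧ v.toList ≠ [] ∧
      u.toList.maximum = v.toList.maximum) x y := rfl

lemma trPrec_eq (x y : MonoidAlgebra ℚ (FreeMonoid α)) :
    trPrec x y = trOp (fun u v => u.toList ≠ [] ∧ v.toList ≠ [] ∧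
      v.toList.maximum < u.toList.maximum) x y := rfl

lemma max_append (l₁ l₂ : List α) :
    (l₁ ++ l₂).maximum = max l₁.maximum l₂.maximum := by
  induction l₁ with
  | nil => simp
  | cons a t ih => simp [List.maximum_cons, ih, max_assoc]

end Ops

lemma key (u v w : FreeMonoid ℕ) (a b c : ℚ) :
    trSucc (trPrec (MonoidAlgebra.single u a) (MonoidAlgebra.single v b)
        + trCirc (MonoidAlgebra.single u a) (MonoidAlgebra.single v b)
        + trSucc (MonoidAlgebra.single u a) (MonoidAlgebra.single v b))
      (MonoidAlgebra.single w c)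
    = trSucc (MonoidAlgebra.single u a)
        (trSucc (MonoidAlgebra.single v b) (MonoidAlgebra.single w c)) := by
  simp only [trSucc_eq, trCirc_eq, trPrec_eq]
  rw [trOp_single_single, trOp_single_single, trOp_single_single, trOp_single_single]
  by_cases hu : u.toList = []
  · simp only [hu, ne_eq, not_true_eq_false, false_and, if_false, add_zero, zero_add,
      trOp_zero_left]
    split
    · rw [trOp_single_single]
      simp [hu]
    · rw [trOp_zero_right]
  by_cases hv : v.toList = []
  · simp only [hv, ne_eq, not_true_eq_false, false_and, and_false, if_false,
      add_zero, zero_add, trOp_zero_left]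
    rw [trOp_zero_right]
  have hsum : (if (u.toList ≠ [] ∧ v.toList ≠ [] ∧ v.toList.maximum < u.toList.maximum)
        then MonoidAlgebra.single (u * v) (a * b) else 0)
      + (if (u.toList ≠ [] ∧ v.toList ≠ [] ∧ u.toList.maximum = v.toList.maximum)
        then MonoidAlgebra.single (u * v) (a * b) else 0)
      + (if (u.toList ≠ [] ∧ v.toList ≠ [] ∧ u.toList.maximum < v.toList.maximum)
        then MonoidAlgebra.single (u * v) (a * b) else 0)
      = MonoidAlgebra.single (u * v) (a * b) := by
    rcases lt_trichotomy u.toList.maximum v.toList.maximum with h | h | h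
    · simp [hu, hv, h, h.ne, h.asymm]
    · simp [hu, hv, h, lt_irrefl]
    · simp [hu, hv, h, h.ne', h.asymm]
  rw [hsum, trOp_single_single]
  have huv : (u * v).toList = u.toList ++ v.toList := rfl
  have hvwl : (v * w).toList = v.toList ++ w.toList := rfl
  by_cases hw : w.toList = []
  · simp [hw, trOp_zero_right]
  by_cases hvw : v.toList.maximum < w.toList.maximum
  · conv_rhs => rw [if_pos ⟨hv, hw, hvw⟩]
    rw [trOp_single_single]
    have h1 : (u * v).toList ≠ [] := by simp [huv, hu]
    have h2 : (v * w).toList ≠ [] := by simp [hvwl, hv]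
    have hm : (u * v).toList.maximum < w.toList.maximum ↔
        u.toList.maximum < (v * w).toList.maximum := by
      rw [huv, hvwl, max_append, max_append, max_lt_iff]
      constructor
      · rintro ⟨ha, _⟩; exact lt_max_iff.mpr (Or.inr ha)
      · intro h; rw [max_eq_right hvw.le] at h; exact ⟨h, hvw⟩
    by_cases hlt : (u * v).toList.maximum < w.toList.maximum
    · rw [if_pos ⟨h1, hw, hlt⟩, if_pos ⟨hu, h2, hm.mp hlt⟩, mul_assoc, mul_assoc]
    · rw [if_neg (fun h => hlt h.2.2), if_neg (fun h => hlt (hm.mpr h.2.2))]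
  · conv_rhs => rw [if_neg (fun h : _ ∧ _ ∧ (FreeMonoid.toList v).maximum < (FreeMonoid.toList w).maximum => hvw h.2.2)]
    rw [trOp_zero_right, if_neg]
    rintro ⟨-, hw', hlt⟩
    rw [huv, max_append, max_lt_iff] at hlt
    exact hvw hlt.2


section Prime
variable {α : Type*} (P : FreeMonoid α → FreeMonoid α → Prop) [∀ u v, Decidable (P u v)]

lemma trOp_add_left' (x₁ x₂ : MonoidAlgebra ℚ (FreeMonoid α)) (y : MonoidAlgebra ℚ (FreeMonoid α)) :
    trOp P (x₁ + x₂) y = trOp P x₁ y + trOp P x₂ y := trOp_add_left P x₁ x₂ y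

lemma trOp_add_right' (x : MonoidAlgebra ℚ (FreeMonoid α)) (y₁ y₂ : MonoidAlgebra ℚ (FreeMonoid α)) :
    trOp P x (y₁ + y₂) = trOp P x y₁ + trOp P x y₂ := trOp_add_right P x y₁ y₂

lemma trOp_zero_left' (y : MonoidAlgebra ℚ (FreeMonoid α)) :
    trOp P (0 : MonoidAlgebra ℚ (FreeMonoid α)) y = 0 := trOp_zero_left P y

lemma trOp_zero_right' (x : MonoidAlgebra ℚ (FreeMonoid α)) :
    trOp P x (0 : MonoidAlgebra ℚ (FreeMonoid α)) = 0 := trOp_zero_right P x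

end Prime

/-- Dendriform trialgebra axiom: `(x ≺ y + x ∘ y + x ≻ y) ≻ z = x ≻ (y ≻ z)`. -/
theorem sum_succ (x y z : MonoidAlgebra ℚ (FreeMonoid ℕ)) :
    trSucc (trPrec x y + trCirc x y + trSucc x y) z = trSucc x (trSucc y z) := by
  induction x using MonoidAlgebra.induction_linear with
  | zero => simp only [trSucc_eq, trCirc_eq, trPrec_eq, trOp_zero_left, trOp_zero_left', add_zero]
  | add x₁ x₂ h₁ h₂ =>
    simp only [trSucc_eq, trCirc_eq, trPrec_eq, trOp_add_left, trOp_add_left'] at h₁ h₂ ⊢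
    rw [← h₁, ← h₂]; abel
  | single u a =>
    induction y using MonoidAlgebra.induction_linear with
    | zero => simp only [trSucc_eq, trCirc_eq, trPrec_eq, trOp_zero_left, trOp_zero_left', trOp_zero_right, trOp_zero_right', add_zero]
    | add y₁ y₂ h₁ h₂ =>
      simp only [trSucc_eq, trCirc_eq, trPrec_eq, trOp_add_left, trOp_add_left', trOp_add_right, trOp_add_right'] at h₁ h₂ ⊢
      rw [← h₁, ← h₂]; abel
    | single v b =>
      induction z using MonoidAlgebra.induction_linear with
      | zero => simp only [trSucc_eq, trOp_zero_right, trOp_zero_right']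
      | add z₁ z₂ h₁ h₂ =>
        simp only [trSucc_eq, trCirc_eq, trPrec_eq, trOp_add_right, trOp_add_right'] at h₁ h₂ ⊢
        rw [← h₁, ← h₂]
      | single w c => exact key u v w a b c
end

section
/- Let F = MonoidAlgebra ℚ (FreeMonoid ℕ) with the three bilinear operations ≺, ∘, ≻ defined on basis words by Loday–Ronco's max-letter rule. Then for all x, y, z ∈ F, (x ≻ y) ∘ z = x ≻ (y ∘ z). -/
section Aux
variable {α : Type*} [LinearOrder α]

lemma aux_max_append (u v : List α) :
    (u ++ v).maximum = max u.maximum v.maximum := by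
  induction u with
  | nil => simp
  | cons a t ih => simp [List.maximum_cons, ih, max_assoc]

/-- Generalized bilinear operation on basis words, conditional on a predicate. -/
noncomputable def genOp (P : FreeMonoid α → FreeMonoid α → Prop) [DecidableRel P]
    (x y : MonoidAlgebra ℚ (FreeMonoid α)) : MonoidAlgebra ℚ (FreeMonoid α) :=
  x.coeff.sum fun u a => y.coeff.sum fun v b =>
    if P u v then MonoidAlgebra.single (u * v) (a * b) else 0

variable (P : FreeMonoid α → FreeMonoid α → Prop) [DecidableRel P]

omit [LinearOrder α] in
lemma genOp_zero_left (y) : genOp P 0 y = 0 := by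
  simp [genOp]

omit [LinearOrder α] in
lemma genOp_zero_right (x) : genOp P x 0 = 0 := by
  simp [genOp]

omit [LinearOrder α] in
lemma genOp_add_left (x x' y) : genOp P (x + x') y = genOp P x y + genOp P x' y := by
  classical
  unfold genOp
  rw [MonoidAlgebra.coeff_add, Finsupp.sum_add_index]
  · intro u _; simp
  · intro u _ a a'
    rw [← Finsupp.sum_add]
    congr 1; funext v b
    split_ifs with h
    · rw [add_mul]; exact MonoidAlgebra.single_add (u*v) (a*b) (a'*b)
    · simp

omit [LinearOrder α] in
lemma genOp_add_right (x y y') : genOp P x (y + y') = genOp P x y + genOp P x y' := by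
  classical
  unfold genOp
  rw [← Finsupp.sum_add]
  congr 1; funext u a
  rw [MonoidAlgebra.coeff_add, Finsupp.sum_add_index]
  · intro v _; simp
  · intro v _ b b'
    split_ifs with h
    · rw [mul_add]; exact MonoidAlgebra.single_add (u*v) (a*b) (a*b')
    · simp

omit [LinearOrder α] in
lemma genOp_single_single (u v : FreeMonoid α) (a b : ℚ) :
    genOp P (MonoidAlgebra.single u a) (MonoidAlgebra.single v b) =
      if P u v then MonoidAlgebra.single (u * v) (a * b) else 0 := by
  classical
  unfold genOp
  rw [MonoidAlgebra.coeff_single, MonoidAlgebra.coeff_single, Finsupp.sum_single_index,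
    Finsupp.sum_single_index]
  · split_ifs with h <;> simp
  · rw [Finsupp.sum_single_index] <;> split_ifs <;> simp

/-- The predicate for `trSucc`. -/
def PS : FreeMonoid α → FreeMonoid α → Prop := fun u v =>
  u.toList ≠ [] ∧ v.toList ≠ [] ∧ u.toList.maximum < v.toList.maximum

/-- The predicate for `trCirc`. -/
def PC : FreeMonoid α → FreeMonoid α → Prop := fun u v =>
  u.toList ≠ [] ∧ v.toList ≠ [] ∧ u.toList.maximum = v.toList.maximum

instance : DecidableRel (PS (α := α)) := fun _ _ => instDecidableAnd
instance : DecidableRel (PC (α := α)) := fun _ _ => instDecidableAnd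

lemma trSucc_eq_genOp (x y : MonoidAlgebra ℚ (FreeMonoid α)) :
    trSucc x y = genOp PS x y := rfl

lemma trCirc_eq_genOp (x y : MonoidAlgebra ℚ (FreeMonoid α)) :
    trCirc x y = genOp PC x y := rfl

lemma key_iff (u v w : FreeMonoid α) :
    (PS u v ∧ PC (u * v) w) ↔ (PC v w ∧ PS u (v * w)) := by
  simp only [PS, PC, FreeMonoid.toList_mul, aux_max_append, ne_eq, List.append_eq_nil_iff]
  constructor
  · rintro ⟨⟨hu, hv, hlt⟩, -, hw, hmax⟩
    rw [max_eq_right hlt.le] at hmax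
    exact ⟨⟨hv, hw, hmax⟩, hu, by tauto, by rw [← hmax, max_self]; exact hlt⟩
  · rintro ⟨⟨hv, hw, hmax⟩, hu, -, hlt⟩
    rw [← hmax, max_self] at hlt
    exact ⟨⟨hu, hv, hlt⟩, by tauto, hw, by rw [max_eq_right hlt.le, hmax]⟩

end Aux

/-- Dendriform trialgebra axiom: `(x ≻ y) ∘ z = x ≻ (y ∘ z)`. -/
theorem succ_circ (x y z : MonoidAlgebra ℚ (FreeMonoid ℕ)) :
    trCirc (trSucc x y) z = trSucc x (trCirc y z) := by
  simp only [trSucc_eq_genOp, trCirc_eq_genOp]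
  induction x using MonoidAlgebra.induction_linear with
  | zero => simp [genOp_zero_left]
  | add x x' hx hx' =>
    rw [genOp_add_left, genOp_add_left, genOp_add_left, hx, hx']
  | single u a =>
    induction y using MonoidAlgebra.induction_linear with
    | zero => simp [genOp_zero_left, genOp_zero_right]
    | add y y' hy hy' =>
      rw [genOp_add_right, genOp_add_left, genOp_add_left, genOp_add_right, hy, hy']
    | single v b =>
      induction z using MonoidAlgebra.induction_linear with
      | zero => simp [genOp_zero_right]
      | add z z' hz hz' =>
        rw [genOp_add_right, genOp_add_right, genOp_add_right, hz, hz']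
      | single w c =>
        rw [genOp_single_single, genOp_single_single]
        by_cases h1 : PS u v <;> by_cases h2 : PC v w
        · rw [if_pos h1, if_pos h2, genOp_single_single, genOp_single_single,
            mul_assoc, mul_assoc]
          exact if_congr ⟨fun h => ((key_iff u v w).mp ⟨h1, h⟩).2,
            fun h => ((key_iff u v w).mpr ⟨h2, h⟩).2⟩ rfl rfl
        · rw [if_pos h1, if_neg h2, genOp_single_single, genOp_zero_right, if_neg]
          exact fun h => h2 ((key_iff u v w).mp ⟨h1, h⟩).1
        · rw [if_neg h1, if_pos h2, genOp_zero_left, genOp_single_single, eq_comm, if_neg]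
          exact fun h => h1 ((key_iff u v w).mpr ⟨h2, h⟩).1
        · rw [if_neg h1, if_neg h2, genOp_zero_left, genOp_zero_right]
end

section
/- Fix N ≥ 1 and work in MonoidAlgebra ℚ (FreeMonoid (Fin N)). The family (M_u), indexed by all packed words u whose greatest letter is at most N, is linearly independent. -/
/-- The rank of the letter `x` in the word `w`: one plus the number of distinct letters
of `w` smaller than `x`. -/
def rank (w : List ℕ) (x : ℕ) : ℕ := ((w.filter (· < x)).dedup).length + 1

/-- The packed word of a word `w`: if the distinct letters occurring in `w` are
`b₁ < b₂ < … < b_k`, each occurrence of `b_j` is replaced by `j`. -/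
def pack (w : List ℕ) : List ℕ := w.map (rank w)

/-- For a packed word `u`, the element `M_u` of `MonoidAlgebra ℚ (FreeMonoid (Fin N))`:
the sum of all words `w` over the alphabet `Fin N` (identified with `{1 < 2 < … < N}`)
whose packed word is `u`. -/
noncomputable def Mword (N : ℕ) (u : List ℕ) : MonoidAlgebra ℚ (FreeMonoid (Fin N)) :=
  ∑ f : Fin u.length → Fin N,
    if pack ((List.ofFn f).map (fun i => (i : ℕ) + 1)) = u
    then MonoidAlgebra.single (FreeMonoid.ofList (List.ofFn f)) (1 : ℚ) else 0

lemma map_coe {N : ℕ} (l : List (Fin N)) :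
    (l.map (fun i => (i : ℕ) + 1)) = l.map (fun i : Fin N => (i : ℕ) + 1) := by
  induction l with
  | nil => rfl
  | cons a t ih => simpa using ih

lemma pack_length (w : List ℕ) : (pack w).length = w.length := by simp [pack]

lemma one_le_of_mem_pack {w : List ℕ} {x : ℕ} (hx : x ∈ pack w) : 1 ≤ x := by
  simp only [pack, List.mem_map] at hx
  obtain ⟨y, _, rfl⟩ := hx
  simp [rank]

lemma Mword_apply (N : ℕ) (v : List ℕ) (l : List (Fin N)) :
    (Mword N v).coeff (FreeMonoid.ofList l)
      = if pack (l.map (fun i : Fin N => (i : ℕ) + 1)) = v then 1 else 0 := by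
  classical
  unfold Mword
  rw [MonoidAlgebra.coeff_sum, Finsupp.finset_sum_apply]
  have hterm : ∀ f : Fin v.length → Fin N,
      (if pack ((List.ofFn f).map (fun i => (i : ℕ) + 1)) = v
        then MonoidAlgebra.single (FreeMonoid.ofList (List.ofFn f)) (1 : ℚ) else 0).coeff
        (FreeMonoid.ofList l)
      = if pack ((List.ofFn f).map (fun i : Fin N => (i : ℕ) + 1)) = v ∧ List.ofFn f = l
        then 1 else 0 := by
    intro f
    rw [map_coe]
    split_ifs with h1 h2 h3
    · simp only [MonoidAlgebra.coeff_single]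
      rw [Finsupp.single_apply, if_pos]
      exact congrArg FreeMonoid.ofList h2.2
    · simp only [MonoidAlgebra.coeff_single]
      rw [Finsupp.single_apply, if_neg]
      intro hc
      exact (not_and.mp h2 h1) (FreeMonoid.ofList.injective hc)
    · exact absurd h3.1 h1
    · simp
  simp only [hterm]
  by_cases hp : pack (l.map (fun i : Fin N => (i : ℕ) + 1)) = v
  · rw [if_pos hp]
    have hlen : l.length = v.length := by
      rw [← hp, pack_length, List.length_map]
    set f0 : Fin v.length → Fin N := fun i => l.get (Fin.cast hlen.symm i) with hf0
    have hofn : List.ofFn f0 = l := by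
      apply List.ext_getElem
      · simp [hlen]
      · intro i h1 h2
        simp [hf0]
    have hiff : ∀ f : Fin v.length → Fin N,
        (pack ((List.ofFn f).map (fun i : Fin N => (i : ℕ) + 1)) = v ∧ List.ofFn f = l)
          ↔ f = f0 := by
      intro f
      constructor
      · rintro ⟨-, hfl⟩
        exact List.ofFn_injective (hfl.trans hofn.symm)
      · rintro rfl
        exact ⟨by rw [hofn, hp], hofn⟩
    simp only [hiff]
    simp
  · rw [if_neg hp]
    apply Finset.sum_eq_zero
    intro f _
    rw [if_neg]
    rintro ⟨h1, h2⟩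
    exact hp (h2 ▸ h1)

lemma pmap_map_eq {u : List ℕ} (h : ∀ x ∈ u, 1 ≤ x) {N : ℕ}
    (hb : ∀ x ∈ u, x - 1 < N) :
    (u.pmap (fun x hx => (⟨x - 1, hb x hx⟩ : Fin N)) (fun _ hx => hx)).map
      (fun i : Fin N => (i : ℕ) + 1) = u := by
  rw [List.map_pmap]
  have := List.pmap_congr_left (p := (· ∈ u)) (q := (· ∈ u))
    (f := fun x hx => ((⟨x - 1, hb x hx⟩ : Fin N) : ℕ) + 1)
    (g := fun x _ => x) u (H₁ := fun _ hx => hx) (H₂ := fun _ hx => hx)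
    (fun a ha _ _ => by have := h a ha; simp; omega)
  rw [this, List.pmap_eq_map]; exact List.map_id u

/-- The family `(M_u)`, indexed by the packed words `u` whose greatest letter is at most
`N`, is linearly independent in `MonoidAlgebra ℚ (FreeMonoid (Fin N))`. -/
theorem Mword_linearIndependent (N : ℕ) (hN : 1 ≤ N) :
    LinearIndependent ℚ
      (fun u : {u : List ℕ // pack u = u ∧ ∀ x ∈ u, x ≤ N} => Mword N u.val) := by
  classical
  rw [linearIndependent_iff']
  intro s g hsum u hu
  have h1 : ∀ x ∈ u.1, 1 ≤ x := fun x hx => one_le_of_mem_pack (by rw [u.2.1]; exact hx)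
  have hb : ∀ x ∈ u.1, x - 1 < N := by
    intro x hx
    have := u.2.2 x hx
    have := h1 x hx
    omega
  set l : List (Fin N) := u.1.pmap (fun x hx => (⟨x - 1, hb x hx⟩ : Fin N)) (fun _ hx => hx)
    with hl
  have hlm : l.map (fun i : Fin N => (i : ℕ) + 1) = u.1 := pmap_map_eq h1 hb
  have key : ∀ v : {u : List ℕ // pack u = u ∧ ∀ x ∈ u, x ≤ N},
      (Mword N v.1).coeff (FreeMonoid.ofList l) = if v = u then 1 else 0 := by
    intro v
    rw [Mword_apply, hlm, u.2.1]
    by_cases hv : v = u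
    · subst hv; simp
    · rw [if_neg, if_neg hv]
      intro hc
      exact hv (Subtype.ext hc.symm)
  have := congrArg (fun F : MonoidAlgebra ℚ (FreeMonoid (Fin N)) =>
    F.coeff (FreeMonoid.ofList l)) hsum
  rw [MonoidAlgebra.coeff_sum, Finsupp.finset_sum_apply] at this
  have h2 : ∀ i ∈ s, (g i • Mword N i.1).coeff (FreeMonoid.ofList l)
      = if i = u then g i else 0 := by
    intro i _
    have hrfl : (g i • Mword N i.1).coeff (FreeMonoid.ofList l)
        = g i • ((Mword N i.1).coeff (FreeMonoid.ofList l)) := rfl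
    rw [hrfl, key i]
    split_ifs <;> simp
  rw [Finset.sum_congr rfl h2, Finset.sum_ite_eq' s u g, if_pos hu] at this
  exact this
end
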